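/- Let B ∈ M_{p×p}(ℝ) and let f : ℝ → ℂ^p be Z-almost automorphic. Let x : ℝ → ℂ^p be a bounded solution of the differential equation with piecewise constant argument x'(t) = B x(⌊t⌋) + f(t), i.e. a bounded continuous function satisfying x(t) = x(s) + ∫_s^t (B x(⌊u⌋) + f(u)) du for all s ≤ t. Then x is almost automorphic (in Bochner's sense) if and only if the sequence n ↦ x(n), n ∈ ℤ, is discrete almost automorphic. -/

import Mathlib

open MeasureTheory Filter Topology

/-- Bounded, piecewise continuous: continuous on ℝ ∖ ℤ with finite one-sided
limits at every integer. -/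
def BddPC (p : ℕ) (f : ℝ → Fin p → ℂ) : Prop :=
  (∃ C : ℝ, ∀ t : ℝ, ‖f t‖ ≤ C) ∧
  ContinuousOn f {t : ℝ | ∀ n : ℤ, t ≠ (n : ℝ)} ∧
  ∀ n : ℤ, (∃ L : Fin p → ℂ, Tendsto f (𝓝[<] (n : ℝ)) (𝓝 L)) ∧
           (∃ R : Fin p → ℂ, Tendsto f (𝓝[>] (n : ℝ)) (𝓝 R))

/-- `ℤ`-almost automorphic functions. -/
def ZAlmostAutomorphic (p : ℕ) (f : ℝ → Fin p → ℂ) : Prop :=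
  BddPC p f ∧
  ∀ s : ℕ → ℤ, ∃ (φ : ℕ → ℕ) (g : ℝ → Fin p → ℂ), StrictMono φ ∧
    (∀ t : ℝ, Tendsto (fun n => f (t + (s (φ n) : ℝ))) atTop (𝓝 (g t))) ∧
    (∀ t : ℝ, Tendsto (fun n => g (t - (s (φ n) : ℝ))) atTop (𝓝 (f t)))

/-- Almost automorphic functions in the sense of Bochner. -/
def AlmostAutomorphic (p : ℕ) (f : ℝ → Fin p → ℂ) : Prop :=
  (∃ C : ℝ, ∀ t : ℝ, ‖f t‖ ≤ C) ∧ Continuous f ∧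
  ∀ s : ℕ → ℝ, ∃ (φ : ℕ → ℕ) (g : ℝ → Fin p → ℂ), StrictMono φ ∧
    (∀ t : ℝ, Tendsto (fun n => f (t + s (φ n))) atTop (𝓝 (g t))) ∧
    (∀ t : ℝ, Tendsto (fun n => g (t - s (φ n))) atTop (𝓝 (f t)))

/-- Discrete almost automorphic sequences `ℤ → ℂ^p`. -/
def DiscreteAA (p : ℕ) (f : ℤ → Fin p → ℂ) : Prop :=
  ∀ s : ℕ → ℤ, ∃ (φ : ℕ → ℕ) (g : ℤ → Fin p → ℂ), StrictMono φ ∧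
    (∀ k : ℤ, Tendsto (fun n => f (k + s (φ n))) atTop (𝓝 (g k))) ∧
    (∀ k : ℤ, Tendsto (fun n => g (k - s (φ n))) atTop (𝓝 (f k)))

/-- Multiplication of a complex vector by a real matrix. -/
noncomputable def RMulVec {p : ℕ} (B : Matrix (Fin p) (Fin p) ℝ) (x : Fin p → ℂ) :
    Fin p → ℂ :=
  fun i => ∑ j, ((B i j : ℝ) : ℂ) * x j

lemma rmulVec_continuous {p : ℕ} (B : Matrix (Fin p) (Fin p) ℝ) :
    Continuous (RMulVec B) :=
  continuous_pi fun _ =>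
    continuous_finset_sum _ fun j _ => continuous_const.mul (continuous_apply j)

lemma intervalIntegrable_of_bdd {p : ℕ} {h : ℝ → Fin p → ℂ}
    (hm : AEStronglyMeasurable h volume) {C : ℝ} (hb : ∀ t, ‖h t‖ ≤ C) (a b : ℝ) :
    IntervalIntegrable h volume a b := by
  constructor <;>
  · haveI : IsFiniteMeasure (volume.restrict (Set.Ioc (min a b) (max a b))) :=
      ⟨by rw [Measure.restrict_apply_univ]; exact measure_Ioc_lt_top⟩
    refine ⟨hm.restrict, ?_⟩
    haveI : IsFiniteMeasure (volume.restrict (Set.Ioc a b)) :=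
      ⟨by rw [Measure.restrict_apply_univ]; exact measure_Ioc_lt_top⟩
    haveI : IsFiniteMeasure (volume.restrict (Set.Ioc b a)) :=
      ⟨by rw [Measure.restrict_apply_univ]; exact measure_Ioc_lt_top⟩
    exact HasFiniteIntegral.of_bounded (C := C) (ae_of_all _ hb)

lemma depca_key {p : ℕ} (B : Matrix (Fin p) (Fin p) ℝ) (f x : ℝ → Fin p → ℂ)
    (hx : ∀ s t : ℝ, s ≤ t →
      x t = x s + ∫ u in s..t, (RMulVec B (x ((⌊u⌋ : ℤ) : ℝ)) + f u))
    (hfi : ∀ a b : ℝ, IntervalIntegrable f volume a b)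
    (k : ℤ) (t : ℝ) (h1 : (k : ℝ) ≤ t) (h2 : t ≤ (k : ℝ) + 1) :
    x t = x ((k : ℤ) : ℝ) + (t - (k : ℝ)) • RMulVec B (x ((k : ℤ) : ℝ)) +
      ∫ u in ((k : ℤ) : ℝ)..t, f u := by
  have h0 := hx (k : ℝ) t h1
  have hae : ∀ᵐ u : ℝ, u ∈ Set.uIoc (k : ℝ) t →
      (RMulVec B (x ((⌊u⌋ : ℤ) : ℝ)) + f u) = (RMulVec B (x ((k : ℤ) : ℝ)) + f u) := by
    have hne : ∀ᵐ u : ℝ, u ∉ ({(k : ℝ) + 1} : Set ℝ) :=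
      measure_eq_zero_iff_ae_notMem.mp (measure_singleton _)
    filter_upwards [hne] with u hu hmem
    rw [Set.uIoc_of_le h1] at hmem
    have hu1 : u ≠ (k : ℝ) + 1 := by simpa using hu
    have hfl : ⌊u⌋ = k := by
      refine Int.floor_eq_iff.mpr ⟨le_of_lt hmem.1, ?_⟩
      exact lt_of_le_of_ne (le_trans hmem.2 h2) hu1
    rw [hfl]
  rw [intervalIntegral.integral_congr_ae hae,
    intervalIntegral.integral_add intervalIntegrable_const (hfi _ _),
    intervalIntegral.integral_const] at h0
  rw [h0, ← add_assoc]

lemma tendsto_expr {p : ℕ} (B : Matrix (Fin p) (Fin p) ℝ) (k : ℤ)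
    {θ : ℕ → ℝ} {θ' : ℝ} (hθ : Tendsto θ atTop (𝓝 θ'))
    {v : ℕ → Fin p → ℂ} {v' : Fin p → ℂ} (hv : Tendsto v atTop (𝓝 v'))
    {F : ℕ → ℝ → Fin p → ℂ} {G : ℝ → Fin p → ℂ} {C : ℝ}
    (hFm : ∀ n, AEStronglyMeasurable (F n) volume)
    (hFb : ∀ n w, ‖F n w‖ ≤ C)
    (hFG : ∀ w, Tendsto (fun n => F n w) atTop (𝓝 (G w))) :
    Tendsto (fun n => v n + (θ n - ((k : ℤ) : ℝ)) • RMulVec B (v n) +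
        ∫ w in ((k : ℤ) : ℝ)..(θ n), F n w) atTop
      (𝓝 (v' + (θ' - ((k : ℤ) : ℝ)) • RMulVec B v' + ∫ w in ((k : ℤ) : ℝ)..θ', G w)) := by
  have hBv : Tendsto (fun n => RMulVec B (v n)) atTop (𝓝 (RMulVec B v')) :=
    ((rmulVec_continuous B).tendsto _).comp hv
  refine Tendsto.add (Tendsto.add hv ((hθ.sub_const _).smul hBv)) ?_
  have key1 : Tendsto (fun n => ∫ w in ((k : ℤ) : ℝ)..θ', F n w) atTop
      (𝓝 (∫ w in ((k : ℤ) : ℝ)..θ', G w)) := by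
    apply intervalIntegral.tendsto_integral_filter_of_dominated_convergence (bound := fun _ => C)
    · exact Eventually.of_forall fun n => (hFm n).restrict
    · exact Eventually.of_forall fun n => ae_of_all _ fun w _ => hFb n w
    · exact intervalIntegrable_const
    · exact ae_of_all _ fun w _ => hFG w
  have key2 : Tendsto (fun n => ∫ w in θ'..(θ n), F n w) atTop (𝓝 0) := by
    have hb : ∀ n, ‖∫ w in θ'..(θ n), F n w‖ ≤ C * |θ n - θ'| := fun n =>
      intervalIntegral.norm_integral_le_of_norm_le_const fun w _ => hFb n w
    have h0 : Tendsto (fun n => C * |θ n - θ'|) atTop (𝓝 (C * |θ' - θ'|)) :=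
      ((hθ.sub_const θ').abs).const_mul C
    simp only [sub_self, abs_zero, mul_zero] at h0
    exact squeeze_zero_norm hb h0
  have heq : ∀ n, (∫ w in ((k : ℤ) : ℝ)..(θ n), F n w) =
      (∫ w in ((k : ℤ) : ℝ)..θ', F n w) + ∫ w in θ'..(θ n), F n w := fun n =>
    (intervalIntegral.integral_add_adjacent_intervals
      (intervalIntegrable_of_bdd (hFm n) (hFb n) _ _)
      (intervalIntegrable_of_bdd (hFm n) (hFb n) _ _)).symm
  have h3 := key1.add key2
  rw [add_zero] at h3
  exact Tendsto.congr (fun n => (heq n).symm) h3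

lemma floor_eventually_ge {τ : ℕ → ℝ} {σ : ℝ} (hge : ∀ n, σ ≤ τ n)
    (hlim : Tendsto τ atTop (𝓝 σ)) (r : ℝ) :
    ∀ᶠ n in atTop, ⌊r + τ n⌋ = ⌊r + σ⌋ := by
  have h1 : r + σ < ⌊r + σ⌋ + 1 := Int.lt_floor_add_one _
  have h2 : ∀ᶠ n in atTop, τ n < σ + (((⌊r + σ⌋ : ℝ) + 1) - (r + σ)) :=
    hlim.eventually_lt_const (by linarith)
  filter_upwards [h2] with n hn
  have h3 : (⌊r + σ⌋ : ℝ) ≤ r + σ := Int.floor_le _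
  refine Int.floor_eq_iff.mpr ⟨?_, ?_⟩
  · linarith [hge n]
  · push_cast
    linarith

lemma floor_eventually_lt {τ : ℕ → ℝ} {σ : ℝ} (hlt : ∀ n, τ n < σ)
    (hlim : Tendsto τ atTop (𝓝 σ)) (r : ℝ) :
    ∀ᶠ n in atTop, ⌊r + τ n⌋ = ⌈r + σ⌉ - 1 := by
  have h1 : (⌈r + σ⌉ : ℝ) < (r + σ) + 1 := Int.ceil_lt_add_one _
  have h2 : ∀ᶠ n in atTop, σ - ((r + σ) - ((⌈r + σ⌉ : ℝ) - 1)) < τ n :=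
    hlim.eventually_const_lt (by linarith)
  filter_upwards [h2] with n hn
  have h3 : r + σ ≤ (⌈r + σ⌉ : ℝ) := Int.le_ceil _
  refine Int.floor_eq_iff.mpr ⟨?_, ?_⟩ <;> push_cast <;> [linarith; linarith [hlt n]]

lemma ceil_eventually_gt {τ : ℕ → ℝ} (hgt : ∀ n, 0 < τ n)
    (hlim : Tendsto τ atTop (𝓝 0)) (t : ℝ) :
    ∀ᶠ n in atTop, ⌈t + τ n⌉ = ⌊t⌋ + 1 := by
  have h1 : t < (⌊t⌋ : ℝ) + 1 := Int.lt_floor_add_one t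
  have h2 : ∀ᶠ n in atTop, τ n < ((⌊t⌋ : ℝ) + 1) - t := hlim.eventually_lt_const (by linarith)
  filter_upwards [h2] with n hn
  have h3 : (⌊t⌋ : ℝ) ≤ t := Int.floor_le t
  refine Int.ceil_eq_iff.mpr ⟨?_, ?_⟩ <;> push_cast <;> [linarith [hgt n]; linarith]

lemma exists_subseq_of_infinite {P : ℕ → Prop} (h : {n | P n}.Infinite) :
    ∃ ψ : ℕ → ℕ, StrictMono ψ ∧ ∀ n, P (ψ n) :=
  ⟨Nat.nth P, Nat.nth_strictMono h, fun n => Nat.nth_mem_of_infinite h n⟩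

lemma main_case {p : ℕ} (B : Matrix (Fin p) (Fin p) ℝ) (f x : ℝ → Fin p → ℂ)
    (hx : ∀ s t : ℝ, s ≤ t →
      x t = x s + ∫ u in s..t, (RMulVec B (x ((⌊u⌋ : ℤ) : ℝ)) + f u))
    {Cf : ℝ} (hfb : ∀ t, ‖f t‖ ≤ Cf) (hfm : AEStronglyMeasurable f volume)
    (m : ℕ → ℤ) (τ : ℕ → ℝ) (σ : ℝ) (hτ : Tendsto τ atTop (𝓝 σ))
    (g : ℝ → Fin p → ℂ)
    (hg1 : ∀ w : ℝ, Tendsto (fun n => f (w + ((m n : ℤ) : ℝ))) atTop (𝓝 (g w)))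
    (hg2 : ∀ w : ℝ, Tendsto (fun n => g (w - ((m n : ℤ) : ℝ))) atTop (𝓝 (f w)))
    (xa : ℤ → Fin p → ℂ)
    (ha1 : ∀ k : ℤ, Tendsto (fun n => x (((k + m n : ℤ)) : ℝ)) atTop (𝓝 (xa k)))
    (ha2 : ∀ k : ℤ, Tendsto (fun n => xa (k - m n)) atTop (𝓝 (x ((k : ℤ) : ℝ))))
    (Kf : ℝ → ℤ) (Kb : ℝ → ℤ)
    (hKshift : ∀ (r : ℝ) (j : ℤ), Kf (r - (j : ℝ)) = Kf r - j)
    (hfwd : ∀ t : ℝ, ∀ᶠ n in atTop, ⌊t + τ n⌋ = Kf t)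
    (hbwd : ∀ t : ℝ, ∀ᶠ n in atTop, Kf (t - τ n) = Kb t)
    (hKb : ∀ t : ℝ, ((Kb t : ℤ) : ℝ) ≤ t ∧ t ≤ ((Kb t : ℤ) : ℝ) + 1) :
    ∃ X : ℝ → Fin p → ℂ,
      (∀ t : ℝ, Tendsto (fun n => x (t + (((m n : ℤ) : ℝ) + τ n))) atTop (𝓝 (X t))) ∧
      (∀ t : ℝ, Tendsto (fun n => X (t - (((m n : ℤ) : ℝ) + τ n))) atTop (𝓝 (x t))) := by
  have hfi : ∀ a b : ℝ, IntervalIntegrable f volume a b :=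
    intervalIntegrable_of_bdd hfm hfb
  have key := depca_key B f x hx hfi
  have hfm' : ∀ c : ℝ, AEStronglyMeasurable (fun w => f (w + c)) volume := fun c =>
    hfm.comp_measurePreserving (measurePreserving_add_right volume c)
  have hgm : AEStronglyMeasurable g volume :=
    aestronglyMeasurable_of_tendsto_ae atTop (fun n => hfm' ((m n : ℤ) : ℝ))
      (ae_of_all _ hg1)
  have hgb : ∀ w, ‖g w‖ ≤ Cf := fun w =>
    le_of_tendsto ((continuous_norm.tendsto _).comp (hg1 w))
      (Eventually.of_forall fun n => hfb _)
  have hgm' : ∀ c : ℝ, AEStronglyMeasurable (fun w => g (w - c)) volume := fun c => by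
    have h := hgm.comp_measurePreserving (measurePreserving_add_right volume (-c))
    simp only [sub_eq_add_neg]; exact h
  refine ⟨fun r => xa (Kf r) + ((r + σ) - ((Kf r : ℤ) : ℝ)) • RMulVec B (xa (Kf r)) +
      ∫ w in ((Kf r : ℤ) : ℝ)..(r + σ), g w, fun t => ?_, fun t => ?_⟩
  · -- forward
    have hlim := tendsto_expr B (Kf t) (θ := fun n => t + τ n) (θ' := t + σ)
      (tendsto_const_nhds.add hτ) (ha1 (Kf t))
      (F := fun n w => f (w + ((m n : ℤ) : ℝ))) (G := g) (C := Cf)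
      (fun n => hfm' _) (fun n w => hfb _) hg1
    refine Tendsto.congr' ?_ hlim
    filter_upwards [hfwd t] with n hn
    have hfl : ⌊t + (((m n : ℤ) : ℝ) + τ n)⌋ = Kf t + m n := by
      rw [show t + (((m n : ℤ) : ℝ) + τ n) = (t + τ n) + ((m n : ℤ) : ℝ) by ring,
        Int.floor_add_intCast, hn]
    have h1 : ((Kf t + m n : ℤ) : ℝ) ≤ t + (((m n : ℤ) : ℝ) + τ n) := by
      rw [← hfl]; exact Int.floor_le _
    have h2 : t + (((m n : ℤ) : ℝ) + τ n) ≤ ((Kf t + m n : ℤ) : ℝ) + 1 := by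
      rw [← hfl]; exact le_of_lt (Int.lt_floor_add_one _)
    have hk := key (Kf t + m n) (t + (((m n : ℤ) : ℝ) + τ n)) h1 h2
    have hc : (t + (((m n : ℤ) : ℝ) + τ n)) - ((Kf t + m n : ℤ) : ℝ)
        = (t + τ n) - ((Kf t : ℤ) : ℝ) := by push_cast; ring
    have hint : (∫ u in ((Kf t + m n : ℤ) : ℝ)..(t + (((m n : ℤ) : ℝ) + τ n)), f u)
        = ∫ w in ((Kf t : ℤ) : ℝ)..(t + τ n), f (w + ((m n : ℤ) : ℝ)) := by
      rw [intervalIntegral.integral_comp_add_right]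
      congr 1 <;> push_cast <;> ring
    rw [hk, hc, hint]
  · -- backward
    have hθ : Tendsto (fun n => (t + σ) - τ n) atTop (𝓝 t) := by
      have h := Tendsto.sub (tendsto_const_nhds : Tendsto (fun _ : ℕ => t + σ) atTop (𝓝 (t + σ))) hτ
      simpa using h
    have hlim := tendsto_expr B (Kb t) (θ := fun n => (t + σ) - τ n) (θ' := t)
      hθ (ha2 (Kb t))
      (F := fun n w => g (w - ((m n : ℤ) : ℝ))) (G := f) (C := Cf)
      (fun n => hgm' _) (fun n w => hgb _) hg2
    rw [← key (Kb t) t (hKb t).1 (hKb t).2] at hlim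
    refine Tendsto.congr' ?_ hlim
    filter_upwards [hbwd t] with n hn
    have hKr : Kf (t - (((m n : ℤ) : ℝ) + τ n)) = Kb t - m n := by
      rw [show t - (((m n : ℤ) : ℝ) + τ n) = (t - τ n) - ((m n : ℤ) : ℝ) by ring,
        hKshift, hn]
    show _ = xa (Kf (t - (((m n : ℤ) : ℝ) + τ n)))
        + ((t - (((m n : ℤ) : ℝ) + τ n) + σ) - ((Kf (t - (((m n : ℤ) : ℝ) + τ n)) : ℤ) : ℝ))
          • RMulVec B (xa (Kf (t - (((m n : ℤ) : ℝ) + τ n))))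
        + ∫ w in ((Kf (t - (((m n : ℤ) : ℝ) + τ n)) : ℤ) : ℝ)..(t - (((m n : ℤ) : ℝ) + τ n) + σ), g w
    rw [hKr]
    have hc : (t - (((m n : ℤ) : ℝ) + τ n) + σ) - ((Kb t - m n : ℤ) : ℝ)
        = ((t + σ) - τ n) - ((Kb t : ℤ) : ℝ) := by push_cast; ring
    have hint : (∫ w in ((Kb t - m n : ℤ) : ℝ)..(t - (((m n : ℤ) : ℝ) + τ n) + σ), g w)
        = ∫ w in ((Kb t : ℤ) : ℝ)..((t + σ) - τ n), g (w - ((m n : ℤ) : ℝ)) := by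
      rw [intervalIntegral.integral_comp_sub_right]
      congr 1 <;> push_cast <;> ring
    rw [hc, hint]

/-- A bounded solution `x` of the DEPCA `x'(t) = B x(⌊t⌋) + f(t)` with `f`
`ℤ`-almost automorphic is almost automorphic if and only if its restriction to `ℤ`
is discrete almost automorphic. -/
theorem bounded_depca_solution_aa_iff_discrete_aa_pure {p : ℕ}
    (B : Matrix (Fin p) (Fin p) ℝ)
    (f : ℝ → Fin p → ℂ) (hf : ZAlmostAutomorphic p f)
    (x : ℝ → Fin p → ℂ) (hxb : ∃ C : ℝ, ∀ t : ℝ, ‖x t‖ ≤ C) (hxc : Continuous x)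
    (hx : ∀ s t : ℝ, s ≤ t →
      x t = x s + ∫ u in s..t, (RMulVec B (x ((⌊u⌋ : ℤ) : ℝ)) + f u)) :
    AlmostAutomorphic p x ↔ DiscreteAA p (fun n : ℤ => x (n : ℝ)) := by
  obtain ⟨⟨⟨Cf, hfb⟩, hfcont, -⟩, hfZ⟩ := hf
  -- f is a.e. strongly measurable
  have hfm : AEStronglyMeasurable f volume := by
    have hSeq : {t : ℝ | ∀ n : ℤ, t ≠ (n : ℝ)} = (⋃ n : ℤ, {(n : ℝ)})ᶜ := by
      ext t
      simp [Set.mem_iUnion, eq_comm]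
    have hSm : MeasurableSet {t : ℝ | ∀ n : ℤ, t ≠ (n : ℝ)} := by
      rw [hSeq]
      exact (MeasurableSet.iUnion fun n => measurableSet_singleton _).compl
    have h0 : volume ({t : ℝ | ∀ n : ℤ, t ≠ (n : ℝ)}ᶜ) = 0 := by
      rw [hSeq, compl_compl]
      exact (Set.countable_iUnion fun n : ℤ =>
        Set.countable_singleton ((n : ℤ) : ℝ)).measure_zero volume
    have hres := hfcont.aestronglyMeasurable (μ := volume) hSm
    rwa [Measure.restrict_eq_self_of_ae_mem ?_] at hres
    rw [Filter.eventually_iff, mem_ae_iff]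
    simpa using h0
  constructor
  · -- AA → discrete AA
    rintro ⟨-, -, hAA⟩ s
    obtain ⟨φ, g, hφ, h1, h2⟩ := hAA fun n => (s n : ℝ)
    refine ⟨φ, fun k => g ((k : ℤ) : ℝ), hφ, fun k => ?_, fun k => ?_⟩
    · have := h1 ((k : ℤ) : ℝ)
      simp only [Int.cast_add]
      exact this
    · have := h2 ((k : ℤ) : ℝ)
      simp only [Int.cast_sub]
      exact this
  · -- discrete AA → AA
    intro hDAA
    refine ⟨hxb, hxc, fun s => ?_⟩
    set m0 : ℕ → ℤ := fun n => ⌊s n⌋ with hm0def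
    set τ0 : ℕ → ℝ := fun n => Int.fract (s n) with hτ0def
    have hs_eq : ∀ n, s n = ((m0 n : ℤ) : ℝ) + τ0 n := fun n =>
      (Int.floor_add_fract (s n)).symm
    obtain ⟨σ, -, ψ0, hψ0, hτσ⟩ := (isCompact_Icc (a := (0 : ℝ)) (b := 1)).tendsto_subseq
      (x := τ0) fun n => ⟨Int.fract_nonneg _, le_of_lt (Int.fract_lt_one _)⟩
    -- three-way pigeonhole
    have htri : {n | τ0 (ψ0 n) = σ}.Infinite ∨ {n | σ < τ0 (ψ0 n)}.Infinite ∨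
        {n | τ0 (ψ0 n) < σ}.Infinite := by
      by_contra hcon
      push_neg at hcon
      obtain ⟨he, hg, hl⟩ := hcon
      have huniv : (Set.univ : Set ℕ) ⊆ {n | τ0 (ψ0 n) = σ} ∪ {n | σ < τ0 (ψ0 n)} ∪
          {n | τ0 (ψ0 n) < σ} := by
        intro n _
        rcases lt_trichotomy (τ0 (ψ0 n)) σ with h | h | h
        · exact Or.inr h
        · exact Or.inl (Or.inl h)
        · exact Or.inl (Or.inr h)
      exact Set.infinite_univ (Set.Finite.subset ((he.union hg).union hl) huniv)
    -- pick a sign-pattern subsequence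
    obtain ⟨ψ1, hψ1, hpat⟩ :
        ∃ ψ1 : ℕ → ℕ, StrictMono ψ1 ∧
          ((∀ n, τ0 (ψ0 (ψ1 n)) = σ) ∨ (∀ n, σ < τ0 (ψ0 (ψ1 n))) ∨
           (∀ n, τ0 (ψ0 (ψ1 n)) < σ)) := by
      rcases htri with h | h | h
      · obtain ⟨ψ1, h1, h2⟩ := exists_subseq_of_infinite h
        exact ⟨ψ1, h1, Or.inl h2⟩
      · obtain ⟨ψ1, h1, h2⟩ := exists_subseq_of_infinite h
        exact ⟨ψ1, h1, Or.inr (Or.inl h2)⟩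
      · obtain ⟨ψ1, h1, h2⟩ := exists_subseq_of_infinite h
        exact ⟨ψ1, h1, Or.inr (Or.inr h2)⟩
    -- discrete AA extraction
    obtain ⟨ψ2, xa, hψ2, ha1, ha2⟩ := hDAA fun n => m0 (ψ0 (ψ1 n))
    -- Z-AA extraction
    obtain ⟨ψ3, g, hψ3, hg1, hg2⟩ := hfZ fun n => m0 (ψ0 (ψ1 (ψ2 n)))
    set Φ : ℕ → ℕ := fun n => ψ0 (ψ1 (ψ2 (ψ3 n))) with hΦdef
    have hΦ : StrictMono Φ := hψ0.comp (hψ1.comp (hψ2.comp hψ3))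
    set m : ℕ → ℤ := fun n => m0 (Φ n) with hmdef
    set τ : ℕ → ℝ := fun n => τ0 (Φ n) with hτdef
    have hτlim : Tendsto τ atTop (𝓝 σ) :=
      hτσ.comp ((hψ1.comp (hψ2.comp hψ3)).tendsto_atTop)
    have hpat' : (∀ n, τ n = σ) ∨ (∀ n, σ < τ n) ∨ (∀ n, τ n < σ) := by
      rcases hpat with h | h | h
      · exact Or.inl fun n => h (ψ2 (ψ3 n))
      · exact Or.inr (Or.inl fun n => h (ψ2 (ψ3 n)))
      · exact Or.inr (Or.inr fun n => h (ψ2 (ψ3 n)))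
    have ha1' : ∀ k : ℤ, Tendsto (fun n => x (((k + m n : ℤ)) : ℝ)) atTop (𝓝 (xa k)) :=
      fun k => (ha1 k).comp hψ3.tendsto_atTop
    have ha2' : ∀ k : ℤ, Tendsto (fun n => xa (k - m n)) atTop (𝓝 (x ((k : ℤ) : ℝ))) :=
      fun k => (ha2 k).comp hψ3.tendsto_atTop
    -- choose Kf, Kb according to the sign pattern
    obtain ⟨Kf, Kb, hKshift, hfwd, hbwd, hKb⟩ :
        ∃ (Kf Kb : ℝ → ℤ),
          (∀ (r : ℝ) (j : ℤ), Kf (r - (j : ℝ)) = Kf r - j) ∧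
          (∀ t : ℝ, ∀ᶠ n in atTop, ⌊t + τ n⌋ = Kf t) ∧
          (∀ t : ℝ, ∀ᶠ n in atTop, Kf (t - τ n) = Kb t) ∧
          (∀ t : ℝ, ((Kb t : ℤ) : ℝ) ≤ t ∧ t ≤ ((Kb t : ℤ) : ℝ) + 1) := by
      rcases hpat' with h | h | h
      · refine ⟨fun r => ⌊r + σ⌋, fun t => ⌊t⌋, ?_, ?_, ?_, ?_⟩
        · intro r j
          show ⌊r - (j : ℝ) + σ⌋ = ⌊r + σ⌋ - j
          rw [show r - (j : ℝ) + σ = (r + σ) - (j : ℝ) by ring, Int.floor_sub_intCast]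
        · intro t
          exact Eventually.of_forall fun n => by rw [h n]
        · intro t
          refine Eventually.of_forall fun n => by rw [h n]; congr 1; ring
        · intro t
          exact ⟨Int.floor_le t, le_of_lt (Int.lt_floor_add_one t)⟩
      · refine ⟨fun r => ⌊r + σ⌋, fun t => ⌈t⌉ - 1, ?_, ?_, ?_, ?_⟩
        · intro r j
          show ⌊r - (j : ℝ) + σ⌋ = ⌊r + σ⌋ - j
          rw [show r - (j : ℝ) + σ = (r + σ) - (j : ℝ) by ring, Int.floor_sub_intCast]
        · intro t
          exact floor_eventually_ge (fun n => le_of_lt (h n)) hτlim t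
        · intro t
          have hlt : ∀ n, σ - τ n < 0 := fun n => by linarith [h n]
          have hlim0 : Tendsto (fun n => σ - τ n) atTop (𝓝 0) := by
            have h2 := Tendsto.sub (tendsto_const_nhds :
              Tendsto (fun _ : ℕ => σ) atTop (𝓝 σ)) hτlim
            simpa using h2
          filter_upwards [floor_eventually_lt hlt hlim0 t] with n hn
          rw [show t - τ n + σ = t + (σ - τ n) by ring, hn, add_zero]
        · intro t
          push_cast
          constructor
          · linarith [Int.ceil_lt_add_one t]
          · linarith [Int.le_ceil t]
      · refine ⟨fun r => ⌈r + σ⌉ - 1, fun t => ⌊t⌋, ?_, ?_, ?_, ?_⟩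
        · intro r j
          show ⌈r - (j : ℝ) + σ⌉ - 1 = ⌈r + σ⌉ - 1 - j
          rw [show r - (j : ℝ) + σ = (r + σ) - (j : ℝ) by ring, Int.ceil_sub_intCast]
          ring
        · intro t
          exact floor_eventually_lt h hτlim t
        · intro t
          have hgt : ∀ n, 0 < σ - τ n := fun n => by linarith [h n]
          have hlim0 : Tendsto (fun n => σ - τ n) atTop (𝓝 0) := by
            have h2 := Tendsto.sub (tendsto_const_nhds :
              Tendsto (fun _ : ℕ => σ) atTop (𝓝 σ)) hτlim
            simpa using h2
          filter_upwards [ceil_eventually_gt hgt hlim0 t] with n hn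
          rw [show t - τ n + σ = t + (σ - τ n) by ring, hn]
          ring
        · intro t
          exact ⟨Int.floor_le t, le_of_lt (Int.lt_floor_add_one t)⟩
    obtain ⟨X, hX1, hX2⟩ := main_case B f x hx hfb hfm m τ σ hτlim g hg1 hg2 xa ha1' ha2'
      Kf Kb hKshift hfwd hbwd hKb
    refine ⟨Φ, X, hΦ, fun t => ?_, fun t => ?_⟩
    · refine Tendsto.congr (fun n => ?_) (hX1 t)
      rw [← hs_eq (Φ n)]
    · refine Tendsto.congr (fun n => ?_) (hX2 t)
      rw [← hs_eq (Φ n)]
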